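/- (Phase diagram for Bonferroni thresholding.) In the ARW model with parameters 0 < β < 1 and 0 < r < 1, consider the Bonferroni-type threshold t_p(1) = √(2 log p). If r > (1−√(1−β))² then √p · Sep(t_p(1); ε_p, τ_p) → ∞ as p → ∞, while if r < (1−√(1−β))² then √p · Sep(t_p(1); ε_p, τ_p) → 0 as p → ∞. -/

import Mathlib

open Filter Set MeasureTheory

noncomputable def gaussPDF (t : ℝ) : ℝ := (Real.sqrt (2 * Real.pi))⁻¹ * Real.exp (-(t ^ 2) / 2)

/-- standard normal CDF Φ -/
noncomputable def normCDF (t : ℝ) : ℝ := ∫ x in Set.Iic t, gaussPDF x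

/-- survival function of |N(τ,1)| -/
noncomputable def psiBar (τ t : ℝ) : ℝ := (1 - normCDF (t - τ)) + normCDF (-t - τ)

noncomputable def tprFn (ε τ t : ℝ) : ℝ := ε * psiBar τ t

noncomputable def fprFn (ε t : ℝ) : ℝ := (1 - ε) * psiBar 0 t

noncomputable def idrFn (ε τ t : ℝ) : ℝ := ε * normCDF (-t - τ)

/-- clipping proxy separation -/
noncomputable def sepFn (ε τ t : ℝ) : ℝ :=
  2 * τ * (tprFn ε τ t - 2 * idrFn ε τ t) / Real.sqrt (tprFn ε τ t + fprFn ε t)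

/-- proxy false discovery rate -/
noncomputable def fdrFn (ε τ t : ℝ) : ℝ := fprFn ε t / (tprFn ε τ t + fprFn ε t)

/-- magnitude of derivative of TPR -/
noncomputable def tprD (ε τ t : ℝ) : ℝ := ε * (gaussPDF (t - τ) + gaussPDF (t + τ))

/-- magnitude of derivative of FPR -/
noncomputable def fprD (ε t : ℝ) : ℝ := 2 * (1 - ε) * gaussPDF t

/-- proxy local false discovery rate -/
noncomputable def lfdrFn (ε τ t : ℝ) : ℝ := fprD ε t / (tprD ε τ t + fprD ε t)

noncomputable def rhoStar (β : ℝ) : ℝ :=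
  if β ≤ 1 / 2 then 0 else if β ≤ 3 / 4 then β - 1 / 2 else (1 - Real.sqrt (1 - β)) ^ 2

noncomputable def qStar (r β : ℝ) : ℝ := if r ≤ β / 3 then 4 * r else (β + r) ^ 2 / (4 * r)

/-- sparsity ε_p = p^{-β} in the ARW model -/
noncomputable def epsP (β : ℝ) (p : ℕ) : ℝ := (p : ℝ) ^ (-β)

/-- strength τ_p = √(2 r log p) in the ARW model -/
noncomputable def tauP (r : ℝ) (p : ℕ) : ℝ := Real.sqrt (2 * r * Real.log p)

/-- threshold t_p(q) = √(2 q log p) -/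
noncomputable def tP (q : ℝ) (p : ℕ) : ℝ := Real.sqrt (2 * q * Real.log p)

/-- folded two-point mixture G_{ε,τ} -/
noncomputable def gMix (ε τ t : ℝ) : ℝ :=
  (1 - ε) * (normCDF t - normCDF (-t)) + ε * (normCDF (t - τ) - normCDF (-t - τ))

/-- ideal HC objective -/
noncomputable def hcObj (ε τ t : ℝ) : ℝ :=
  ((1 - gMix ε τ t) - psiBar 0 t) / Real.sqrt (gMix ε τ t * (1 - gMix ε τ t))

/-- useful feature discovery exponent δ(q) -/
noncomputable def deltaExp (β r q : ℝ) : ℝ :=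
  if q ≤ r then 1 - β else 1 - β - (Real.sqrt q - Real.sqrt r) ^ 2

/-- separation growth exponent γ(q) -/
noncomputable def gammaExp (β r q : ℝ) : ℝ :=
  deltaExp β r q - max (1 - q) (deltaExp β r q) / 2


noncomputable def tailG (t : ℝ) : ℝ := ∫ x in Set.Ioi t, gaussPDF x

lemma gaussPDF_pos (t : ℝ) : 0 < gaussPDF t := by
  unfold gaussPDF
  positivity

lemma gaussPDF_eq (t : ℝ) : gaussPDF t = (Real.sqrt (2 * Real.pi))⁻¹ * Real.exp (-(1/2) * t ^ 2) := by
  unfold gaussPDF; ring_nf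

lemma gaussPDF_funext : gaussPDF = fun x => (Real.sqrt (2 * Real.pi))⁻¹ * Real.exp (-(1/2) * x ^ 2) := by
  funext x; exact gaussPDF_eq x

lemma integrable_gaussPDF : Integrable gaussPDF := by
  rw [gaussPDF_funext]
  exact (integrable_exp_neg_mul_sq (by norm_num : (0:ℝ) < 1/2)).const_mul _

lemma integral_gaussPDF : ∫ x, gaussPDF x = 1 := by
  have h : ∫ x : ℝ, Real.exp (-(1/2) * x ^ 2) = Real.sqrt (Real.pi / (1/2)) :=
    integral_gaussian (1/2)
  have : ∫ x, gaussPDF x = (Real.sqrt (2 * Real.pi))⁻¹ * ∫ x : ℝ, Real.exp (-(1/2) * x ^ 2) := by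
    rw [← MeasureTheory.integral_const_mul, gaussPDF_funext]
  rw [this, h]
  rw [show Real.pi / (1/2) = 2 * Real.pi by ring]
  rw [inv_mul_cancel₀]
  positivity

lemma normCDF_add_tailG (t : ℝ) : normCDF t + tailG t = 1 := by
  unfold normCDF tailG
  rw [intervalIntegral.integral_Iic_add_Ioi integrable_gaussPDF.integrableOn integrable_gaussPDF.integrableOn]
  exact integral_gaussPDF

lemma normCDF_neg (t : ℝ) : normCDF (-t) = tailG t := by
  unfold normCDF tailG
  have : ∫ x in Iic (-t), gaussPDF x = ∫ x in Iic (-t), gaussPDF (-x) := by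
    congr 1; ext x; unfold gaussPDF; rw [neg_pow]; ring_nf
  rw [this, integral_comp_neg_Iic, neg_neg]

lemma tailG_nonneg (t : ℝ) : 0 ≤ tailG t :=
  setIntegral_nonneg measurableSet_Ioi (fun x _ => (gaussPDF_pos x).le)

lemma tailG_anti {a b : ℝ} (h : a ≤ b) : tailG b ≤ tailG a := by
  unfold tailG
  refine setIntegral_mono_set integrable_gaussPDF.integrableOn
    (ae_of_all _ fun x => (gaussPDF_pos x).le) (ae_of_all _ fun x hx => lt_of_le_of_lt h hx)

lemma hasDerivAt_neg_gaussPDF (y : ℝ) : HasDerivAt (fun z => -gaussPDF z) (y * gaussPDF y) y := by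
  have h : HasDerivAt (fun z : ℝ => -(z ^ 2) / 2) (-y) y := by
    have := ((hasDerivAt_pow 2 y).neg).div_const 2
    simpa using this.congr_deriv (by push_cast; ring)
  have h2 := (h.exp).const_mul ((Real.sqrt (2 * Real.pi))⁻¹)
  have h3 := h2.neg
  refine h3.congr_deriv ?_
  unfold gaussPDF; ring

lemma integral_mul_gaussPDF_Ioi {x : ℝ} (hx : 0 ≤ x) :
    ∫ y in Set.Ioi x, y * gaussPDF y = gaussPDF x := by
  have hlim : Tendsto (fun z => -gaussPDF z) atTop (nhds 0) := by
    rw [gaussPDF_funext]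
    have : Tendsto (fun z : ℝ => Real.exp (-(1/2) * z ^ 2)) atTop (nhds 0) := by
      apply Real.tendsto_exp_atBot.comp
      have h1 : Tendsto (fun z : ℝ => (1/2) * z ^ 2) atTop atTop := by
        apply Tendsto.const_mul_atTop (by norm_num)
        exact tendsto_pow_atTop (by norm_num)
      have := tendsto_neg_atTop_atBot.comp h1
      refine this.congr fun z => by simp [Function.comp]
    have h2 := (this.const_mul ((Real.sqrt (2 * Real.pi))⁻¹)).neg
    simpa using h2
  have := integral_Ioi_of_hasDerivAt_of_nonneg' (g' := fun y => y * gaussPDF y)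
    (fun y hy => hasDerivAt_neg_gaussPDF y)
    (fun y hy => mul_nonneg (le_of_lt (lt_of_le_of_lt hx hy)) (gaussPDF_pos y).le) hlim
  rw [this]; ring

lemma tendsto_neg_gaussPDF : Tendsto (fun z => -gaussPDF z) atTop (nhds 0) := by
  rw [gaussPDF_funext]
  have : Tendsto (fun z : ℝ => Real.exp (-(1/2) * z ^ 2)) atTop (nhds 0) := by
    apply Real.tendsto_exp_atBot.comp
    have h1 : Tendsto (fun z : ℝ => (1/2) * z ^ 2) atTop atTop := by
      apply Tendsto.const_mul_atTop (by norm_num)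
      exact tendsto_pow_atTop (by norm_num)
    have := tendsto_neg_atTop_atBot.comp h1
    refine this.congr fun z => by simp [Function.comp]
  have h2 := (this.const_mul ((Real.sqrt (2 * Real.pi))⁻¹)).neg
  simpa using h2

lemma integrableOn_mul_gaussPDF {x : ℝ} (hx : 0 ≤ x) :
    IntegrableOn (fun y => y * gaussPDF y) (Set.Ioi x) := by
  exact integrableOn_Ioi_deriv_of_nonneg' (fun y hy => hasDerivAt_neg_gaussPDF y)
    (fun y hy => mul_nonneg (le_of_lt (lt_of_le_of_lt hx hy)) (gaussPDF_pos y).le)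
    tendsto_neg_gaussPDF

lemma sqrt_two_pi_gt_one : (1:ℝ) < Real.sqrt (2 * Real.pi) := by
  rw [show (1:ℝ) = Real.sqrt 1 by simp]
  apply Real.sqrt_lt_sqrt (by norm_num)
  nlinarith [Real.pi_gt_three]

lemma gaussPDF_le_exp (t : ℝ) : gaussPDF t ≤ Real.exp (-(t ^ 2) / 2) := by
  unfold gaussPDF
  have h := sqrt_two_pi_gt_one
  nlinarith [Real.exp_pos (-(t ^ 2) / 2), inv_lt_one_of_one_lt₀ h,
    inv_pos.mpr (lt_trans one_pos h)]

/-- Mills-type upper bound -/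
lemma tailG_le {x : ℝ} (hx : 1 ≤ x) : tailG x ≤ Real.exp (-(x ^ 2) / 2) := by
  have h0 : (0:ℝ) ≤ x := le_trans zero_le_one hx
  have h1 : tailG x ≤ ∫ y in Set.Ioi x, y * gaussPDF y := by
    unfold tailG
    refine setIntegral_mono_on integrable_gaussPDF.integrableOn
      (integrableOn_mul_gaussPDF h0) measurableSet_Ioi (fun y hy => ?_)
    have : 1 ≤ y := le_trans hx (le_of_lt hy)
    nlinarith [gaussPDF_pos y]
  calc tailG x ≤ ∫ y in Set.Ioi x, y * gaussPDF y := h1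
    _ = gaussPDF x := integral_mul_gaussPDF_Ioi h0
    _ ≤ Real.exp (-(x ^ 2) / 2) := gaussPDF_le_exp x

/-- lower bound via interval -/
lemma tailG_sub_ge {a b : ℝ} (ha : 0 ≤ a) (hb : a + 1 ≤ b) :
    gaussPDF (a + 1) ≤ tailG a - tailG b := by
  have key : tailG a - tailG (a+1) = ∫ y in Set.Ioc a (a+1), gaussPDF y := by
    have h1 := normCDF_add_tailG a
    have h2 := normCDF_add_tailG (a+1)
    have h3 : normCDF (a+1) - normCDF a = ∫ y in (a)..(a+1), gaussPDF y :=
      intervalIntegral.integral_Iic_sub_Iic integrable_gaussPDF.integrableOn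
        integrable_gaussPDF.integrableOn
    rw [intervalIntegral.integral_of_le (by linarith)] at h3
    linarith [h3]
  have h4 : gaussPDF (a+1) ≤ ∫ y in Set.Ioc a (a+1), gaussPDF y := by
    have hconst : ∫ _ in Set.Ioc a (a+1), gaussPDF (a+1) = gaussPDF (a+1) := by
      rw [setIntegral_const]
      simp [Real.volume_Ioc]
    rw [← hconst]
    refine setIntegral_mono_on ((integrableOn_const_iff enorm_ne_top).mpr (Or.inr (by rw [Real.volume_Ioc]; exact ENNReal.ofReal_lt_top)))
      integrable_gaussPDF.integrableOn measurableSet_Ioc (fun y hy => ?_)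
    unfold gaussPDF
    have hy1 : 0 < y := lt_of_le_of_lt ha hy.1
    have hy2 : y ≤ a + 1 := hy.2
    have : y ^ 2 ≤ (a+1) ^ 2 := by nlinarith
    have := Real.exp_le_exp.mpr (by linarith : -((a+1) ^ 2) / 2 ≤ -(y ^ 2) / 2)
    have hpos : (0:ℝ) < (Real.sqrt (2 * Real.pi))⁻¹ := inv_pos.mpr (lt_trans one_pos sqrt_two_pi_gt_one)
    nlinarith
  have h5 : tailG b ≤ tailG (a+1) := tailG_anti hb
  linarith [key ▸ h4]

lemma one_sub_normCDF (t : ℝ) : 1 - normCDF t = tailG t := by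
  linarith [normCDF_add_tailG t]

lemma psiBar_eq (τ t : ℝ) : psiBar τ t = tailG (t - τ) + tailG (t + τ) := by
  unfold psiBar
  rw [one_sub_normCDF, show -t - τ = -(t + τ) by ring, normCDF_neg]

lemma sep_eq (ε τ t : ℝ) :
    sepFn ε τ t = 2 * τ * (ε * (tailG (t - τ) - tailG (t + τ))) /
      Real.sqrt (ε * (tailG (t - τ) + tailG (t + τ)) + (1 - ε) * (tailG t + tailG t)) := by
  unfold sepFn tprFn fprFn idrFn
  rw [psiBar_eq, psiBar_eq, show -t - τ = -(t + τ) by ring, normCDF_neg]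
  rw [show t - 0 = t by ring, show t + 0 = t by ring]
  ring_nf

lemma sqrt_exp (y : ℝ) : Real.sqrt (Real.exp y) = Real.exp (y / 2) := by
  rw [show Real.exp y = (Real.exp (y/2))^2 by rw [sq, ← Real.exp_add]; ring_nf]
  exact Real.sqrt_sq (Real.exp_pos _).le

lemma sqrt_two_pi_le_three : Real.sqrt (2 * Real.pi) ≤ 3 := by
  rw [show (3:ℝ) = Real.sqrt 9 by rw [show (9:ℝ) = 3^2 by norm_num, Real.sqrt_sq]; norm_num]
  apply Real.sqrt_le_sqrt
  nlinarith [Real.pi_lt_d2]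

lemma gaussPDF_ge {x : ℝ} (hx : 0 ≤ x) :
    (1/9) * Real.exp (-(x^2)/2 - x) ≤ gaussPDF (x + 1) := by
  unfold gaussPDF
  have h1 : Real.exp (-((x+1)^2)/2) = Real.exp (-(x^2)/2 - x) * Real.exp (-(1/2)) := by
    rw [← Real.exp_add]; ring_nf
  rw [h1]
  have hc1 := sqrt_two_pi_gt_one
  have hc3 := sqrt_two_pi_le_three
  have hcinv : Real.sqrt (2 * Real.pi) * (Real.sqrt (2 * Real.pi))⁻¹ = 1 :=
    mul_inv_cancel₀ (by positivity)
  have h2 : (1/3 : ℝ) ≤ (Real.sqrt (2 * Real.pi))⁻¹ := by nlinarith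
  have he3 : Real.exp (1/2) ≤ 3 := by
    calc Real.exp (1/2) ≤ Real.exp 1 := Real.exp_le_exp.mpr (by norm_num)
      _ ≤ 3 := by linarith [Real.exp_one_lt_d9]
  have h3 : (1/3 : ℝ) ≤ Real.exp (-(1/2)) := by
    rw [Real.exp_neg]
    have he0 := Real.exp_pos (1/2 : ℝ)
    have : Real.exp (1/2) * (Real.exp (1/2))⁻¹ = 1 := mul_inv_cancel₀ (by positivity)
    nlinarith
  have h4 := Real.exp_pos (-(x^2)/2 - x)
  have h5 := mul_le_mul h2 h3 (by norm_num) (le_of_lt (by positivity))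
  nlinarith


section key
variable {β r L : ℝ}

lemma key_facts (hr1 : 0 < r) (hr2 : r < 1) (hL0 : 0 ≤ L) :
    Real.sqrt (2*r*L) = Real.sqrt r * Real.sqrt (2*L) ∧
    (Real.sqrt (2*L))^2 = 2*L ∧ 0 ≤ Real.sqrt r ∧ Real.sqrt r ≤ 1 := by
  refine ⟨?_, Real.sq_sqrt (by linarith), Real.sqrt_nonneg r, ?_⟩
  · rw [show 2*r*L = r*(2*L) by ring, Real.sqrt_mul hr1.le]
  · rw [show (1:ℝ) = Real.sqrt 1 by simp]
    exact Real.sqrt_le_sqrt (by linarith)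

set_option maxHeartbeats 1000000 in
/-- Case 1 quantitative lower bound. -/
lemma key_lower (hβ1 : 0 < β) (hr1 : 0 < r) (hr2 : r < 1)
    (hδ : β + (1 - Real.sqrt r)^2 ≤ 1)
    (hL0 : 0 < L)
    (hτ : 1 ≤ Real.sqrt (2*r*L))
    (ha : 1 ≤ (1 - Real.sqrt r) * Real.sqrt (2*L)) :
    (1/9) * Real.exp (((1 - (β + (1 - Real.sqrt r)^2))/2) * L - Real.sqrt (2*L))
      ≤ Real.exp (L/2) * sepFn (Real.exp (-β*L)) (Real.sqrt (2*r*L)) (Real.sqrt (2*L)) := by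
  obtain ⟨f1, f2, f3, f4⟩ := key_facts hr1 hr2 hL0.le
  set s := Real.sqrt r with hs
  set t := Real.sqrt (2*L) with ht
  set τ := Real.sqrt (2*r*L) with hτdef
  set ε := Real.exp (-β*L) with hε
  set δ := β + (1 - s)^2 with hδdef
  have ht0 : 0 ≤ t := Real.sqrt_nonneg _
  have ht1 : 1 ≤ t := by nlinarith
  have haf : t - τ = (1 - s) * t := by rw [f1]; ring
  have ha1 : 1 ≤ t - τ := by rw [haf]; exact ha
  have ha0 : 0 ≤ t - τ := by linarith
  have hab : (t - τ) + 1 ≤ t + τ := by linarith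
  have hasq : (t - τ)^2 = (1-s)^2 * (2*L) := by rw [haf, mul_pow, f2]
  have hεpos : 0 < ε := Real.exp_pos _
  have hε1 : ε < 1 := by
    rw [hε]; apply Real.exp_lt_one_iff.mpr; nlinarith
  -- exponential identities
  have htail_a : tailG (t - τ) ≤ Real.exp (-(1-s)^2 * L) := by
    have := tailG_le ha1
    rwa [hasq, show -((1-s)^2 * (2*L))/2 = -(1-s)^2 * L by ring] at this
  have htail_b : tailG (t + τ) ≤ Real.exp (-(1-s)^2 * L) :=
    le_trans (tailG_anti (by linarith : t - τ ≤ t + τ)) htail_a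
  have htail_t : tailG t ≤ Real.exp (-L) := by
    have := tailG_le ht1
    rwa [f2, show -(2*L)/2 = -L by ring] at this
  -- numerator lower bound
  have hN : (1/9) * Real.exp (-δ * L - (t - τ)) ≤ ε * (tailG (t-τ) - tailG (t+τ)) := by
    have h1 := tailG_sub_ge ha0 hab
    have h2 := gaussPDF_ge ha0
    have h3 : ε * ((1/9) * Real.exp (-((t-τ)^2)/2 - (t-τ))) ≤ ε * (tailG (t-τ) - tailG (t+τ)) := by
      apply mul_le_mul_of_nonneg_left (le_trans h2 h1) hεpos.le
    calc (1/9) * Real.exp (-δ * L - (t - τ))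
        = ε * ((1/9) * Real.exp (-((t-τ)^2)/2 - (t-τ))) := by
          rw [hasq, hε, mul_comm ε, mul_assoc, ← Real.exp_add]
          congr 2
          rw [hδdef]; ring
      _ ≤ _ := h3
  -- denominator upper bound
  have hD : ε * (tailG (t-τ) + tailG (t+τ)) + (1-ε) * (tailG t + tailG t)
      ≤ 4 * Real.exp (-δ * L) := by
    have hεe : ε * Real.exp (-(1-s)^2 * L) = Real.exp (-δ * L) := by
      rw [hε, ← Real.exp_add]; congr 1; rw [hδdef]; ring
    have h5 : Real.exp (-L) ≤ Real.exp (-δ*L) := by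
      apply Real.exp_le_exp.mpr; nlinarith
    have h6 : ε * (tailG (t-τ) + tailG (t+τ)) ≤ 2 * Real.exp (-δ * L) := by
      calc ε * (tailG (t-τ) + tailG (t+τ)) ≤ ε * (2 * Real.exp (-(1-s)^2 * L)) := by
            apply mul_le_mul_of_nonneg_left (by linarith) hεpos.le
        _ = 2 * Real.exp (-δ * L) := by rw [← hεe]; ring
    have h7 : (1-ε) * (tailG t + tailG t) ≤ 2 * Real.exp (-δ * L) := by
      have hta := tailG_nonneg t
      calc (1-ε) * (tailG t + tailG t) ≤ 1 * (tailG t + tailG t) := by nlinarith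
        _ ≤ 2 * Real.exp (-L) := by linarith
        _ ≤ 2 * Real.exp (-δ * L) := by linarith
    linarith
  -- denominator positivity
  have hDpos : 0 < ε * (tailG (t-τ) + tailG (t+τ)) + (1-ε) * (tailG t + tailG t) := by
    have h8 : gaussPDF (t+1) ≤ tailG t := by
      have h9 := tailG_sub_ge ht0 (le_refl (t+1))
      linarith [tailG_nonneg (t+1)]
    have h8b : 0 < (1-ε) * (tailG t + tailG t) := by
      apply mul_pos (by linarith)
      linarith [gaussPDF_pos (t+1)]
    have h8c : 0 ≤ ε * (tailG (t-τ) + tailG (t+τ)) :=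
      mul_nonneg hεpos.le (by linarith [tailG_nonneg (t-τ), tailG_nonneg (t+τ)])
    linarith
  -- assemble
  rw [sep_eq]
  have hsqrtD : Real.sqrt (ε * (tailG (t-τ) + tailG (t+τ)) + (1-ε) * (tailG t + tailG t))
      ≤ 2 * Real.exp (-δ * L / 2) := by
    calc Real.sqrt _ ≤ Real.sqrt (4 * Real.exp (-δ * L)) := Real.sqrt_le_sqrt hD
      _ = 2 * Real.exp (-δ * L / 2) := by
        rw [show (4:ℝ) * Real.exp (-δ*L) = (2 * Real.exp (-δ*L/2))^2 by
          rw [mul_pow, sq (Real.exp (-δ*L/2)), ← Real.exp_add]; ring_nf]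
        exact Real.sqrt_sq (by positivity)
  have hsqrtDpos : 0 < Real.sqrt (ε * (tailG (t-τ) + tailG (t+τ)) + (1-ε) * (tailG t + tailG t)) :=
    Real.sqrt_pos.mpr hDpos
  have hX : (2/9) * Real.exp (-δ * L - (t - τ)) ≤ 2 * τ * (ε * (tailG (t-τ) - tailG (t+τ))) := by
    have hτ1 : (1:ℝ) ≤ τ := hτ
    have hNpos : 0 ≤ (1/9) * Real.exp (-δ * L - (t - τ)) := by positivity
    calc (2/9) * Real.exp (-δ * L - (t - τ))
        = 2 * 1 * ((1/9) * Real.exp (-δ * L - (t - τ))) := by ring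
      _ ≤ 2 * τ * (ε * (tailG (t-τ) - tailG (t+τ))) := by
          apply mul_le_mul (by linarith) hN hNpos (by linarith)
  have hdiv : (2/9) * Real.exp (-δ * L - (t - τ)) / (2 * Real.exp (-δ * L / 2))
      ≤ 2 * τ * (ε * (tailG (t-τ) - tailG (t+τ))) /
        Real.sqrt (ε * (tailG (t-τ) + tailG (t+τ)) + (1-ε) * (tailG t + tailG t)) := by
    apply div_le_div₀ (le_trans (by positivity) hX) hX hsqrtDpos hsqrtD
  have hrw : Real.exp (L/2) * ((2/9) * Real.exp (-δ * L - (t - τ)) / (2 * Real.exp (-δ * L / 2)))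
      = (1/9) * Real.exp ((1 - δ)/2 * L - (t - τ)) := by
    have h10 : Real.exp (L/2) * ((2/9) * Real.exp (-δ * L - (t - τ)) / (2 * Real.exp (-δ * L / 2)))
        = (1/9) * (Real.exp (L/2) * Real.exp (-δ * L - (t - τ)) / Real.exp (-δ * L / 2)) := by
      ring
    rw [h10, ← Real.exp_add, ← Real.exp_sub]
    congr 2
    ring
  have hstep : Real.exp (L/2) * ((2/9) * Real.exp (-δ * L - (t - τ)) / (2 * Real.exp (-δ * L / 2)))
      ≤ Real.exp (L/2) * (2 * τ * (ε * (tailG (t-τ) - tailG (t+τ))) /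
        Real.sqrt (ε * (tailG (t-τ) + tailG (t+τ)) + (1-ε) * (tailG t + tailG t))) :=
    mul_le_mul_of_nonneg_left hdiv (Real.exp_pos _).le
  refine le_trans ?_ hstep
  rw [hrw]
  have htt : (t - τ) ≤ t := by linarith
  apply mul_le_mul_of_nonneg_left _ (by norm_num : (0:ℝ) ≤ 1/9)
  apply Real.exp_le_exp.mpr
  rw [hδdef]
  linarith

lemma sep_nonneg {ε τ t : ℝ} (hε : 0 ≤ ε) (hτ : 0 ≤ τ) : 0 ≤ sepFn ε τ t := by
  rw [sep_eq]
  apply div_nonneg _ (Real.sqrt_nonneg _)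
  have h := tailG_anti (by linarith : t - τ ≤ t + τ)
  exact mul_nonneg (mul_nonneg (by norm_num) hτ) (mul_nonneg hε (by linarith))

set_option maxHeartbeats 1000000 in
/-- Case 2 quantitative upper bound. -/
lemma key_upper (hβ1 : 0 < β) (hr1 : 0 < r) (hr2 : r < 1)
    (hL0 : 0 < L)
    (hτ : 1 ≤ Real.sqrt (2*r*L))
    (ha : 1 ≤ (1 - Real.sqrt r) * Real.sqrt (2*L))
    (hεhalf : Real.exp (-β*L) ≤ 1/2) :
    Real.exp (L/2) * sepFn (Real.exp (-β*L)) (Real.sqrt (2*r*L)) (Real.sqrt (2*L))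
      ≤ 12 * Real.exp ((1 - (β + (1 - Real.sqrt r)^2)) * L + Real.sqrt (2*L)) := by
  obtain ⟨f1, f2, f3, f4⟩ := key_facts hr1 hr2 hL0.le
  set s := Real.sqrt r with hs
  set t := Real.sqrt (2*L) with ht
  set τ := Real.sqrt (2*r*L) with hτdef
  set ε := Real.exp (-β*L) with hε
  set δ := β + (1 - s)^2 with hδdef
  have ht0 : 0 ≤ t := Real.sqrt_nonneg _
  have ht1 : 1 ≤ t := by nlinarith
  have haf : t - τ = (1 - s) * t := by rw [f1]; ring
  have ha1 : 1 ≤ t - τ := by rw [haf]; exact ha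
  have ha0 : 0 ≤ t - τ := by linarith
  have hasq : (t - τ)^2 = (1-s)^2 * (2*L) := by rw [haf, mul_pow, f2]
  have hεpos : 0 < ε := Real.exp_pos _
  have htail_a : tailG (t - τ) ≤ Real.exp (-(1-s)^2 * L) := by
    have := tailG_le ha1
    rwa [hasq, show -((1-s)^2 * (2*L))/2 = -(1-s)^2 * L by ring] at this
  -- numerator upper bound: X ≤ 4 * exp (-δL + t/2)
  have hτt : τ ≤ t := by rw [f1]; nlinarith
  have ht_exp : t ≤ 2 * Real.exp (t/2) := by
    have := Real.add_one_le_exp (t/2)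
    linarith
  have hεe : ε * Real.exp (-(1-s)^2 * L) = Real.exp (-δ * L) := by
    rw [hε, ← Real.exp_add]; congr 1; rw [hδdef]; ring
  have hX : 2 * τ * (ε * (tailG (t-τ) - tailG (t+τ))) ≤ 4 * Real.exp (-δ * L + t/2) := by
    have h1 : ε * (tailG (t-τ) - tailG (t+τ)) ≤ Real.exp (-δ * L) := by
      have h2 : tailG (t-τ) - tailG (t+τ) ≤ Real.exp (-(1-s)^2 * L) := by
        linarith [tailG_nonneg (t+τ)]
      calc ε * (tailG (t-τ) - tailG (t+τ)) ≤ ε * Real.exp (-(1-s)^2 * L) :=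
            mul_le_mul_of_nonneg_left h2 hεpos.le
        _ = Real.exp (-δ * L) := hεe
    have h3 : 0 ≤ ε * (tailG (t-τ) - tailG (t+τ)) := by
      have := tailG_anti (by linarith : t - τ ≤ t + τ)
      exact mul_nonneg hεpos.le (by linarith)
    calc 2 * τ * (ε * (tailG (t-τ) - tailG (t+τ)))
        ≤ (2 * (2 * Real.exp (t/2))) * Real.exp (-δ * L) := by
          apply mul_le_mul (by linarith) h1 h3 (by positivity)
      _ = 4 * Real.exp (-δ * L + t/2) := by rw [Real.exp_add]; ring
  -- denominator lower bound
  have hY : (1/3) * Real.exp (-L/2 - t/2)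
      ≤ Real.sqrt (ε * (tailG (t-τ) + tailG (t+τ)) + (1-ε) * (tailG t + tailG t)) := by
    have h8 : gaussPDF (t+1) ≤ tailG t := by
      have h9 := tailG_sub_ge ht0 (le_refl (t+1))
      linarith [tailG_nonneg (t+1)]
    have h10 : (1/9) * Real.exp (-(t^2)/2 - t) ≤ gaussPDF (t+1) := gaussPDF_ge ht0
    have h11 : (1/9) * Real.exp (-L - t)
        ≤ ε * (tailG (t-τ) + tailG (t+τ)) + (1-ε) * (tailG t + tailG t) := by
      have e1 : -(t^2)/2 - t = -L - t := by rw [f2]; ring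
      have h12 : (1/9) * Real.exp (-L - t) ≤ tailG t := by rw [← e1]; linarith
      have h13 : (1/2 : ℝ) ≤ 1 - ε := by linarith
      have h14 : 0 ≤ ε * (tailG (t-τ) + tailG (t+τ)) :=
        mul_nonneg hεpos.le (by linarith [tailG_nonneg (t-τ), tailG_nonneg (t+τ)])
      have h15 : tailG t + tailG t ≤ (1-ε) * (tailG t + tailG t) / (1-ε) := by
        rw [mul_div_cancel_left₀]; linarith
      nlinarith [tailG_nonneg t]
    calc (1/3) * Real.exp (-L/2 - t/2)
        = Real.sqrt ((1/9) * Real.exp (-L - t)) := by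
          rw [show (1/9 : ℝ) * Real.exp (-L - t) = ((1/3) * Real.exp (-L/2 - t/2))^2 by
            rw [mul_pow, sq (Real.exp (-L/2 - t/2)), ← Real.exp_add]; ring_nf]
          rw [Real.sqrt_sq (by positivity)]
      _ ≤ _ := Real.sqrt_le_sqrt h11
  have hYpos : (0:ℝ) < (1/3) * Real.exp (-L/2 - t/2) := by positivity
  have hdiv : 2 * τ * (ε * (tailG (t-τ) - tailG (t+τ))) /
        Real.sqrt (ε * (tailG (t-τ) + tailG (t+τ)) + (1-ε) * (tailG t + tailG t))
      ≤ 4 * Real.exp (-δ * L + t/2) / ((1/3) * Real.exp (-L/2 - t/2)) :=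
    div_le_div₀ (by positivity) hX hYpos hY
  rw [sep_eq]
  have hrw : Real.exp (L/2) * (4 * Real.exp (-δ * L + t/2) / ((1/3) * Real.exp (-L/2 - t/2)))
      = 12 * Real.exp ((1 - δ) * L + t) := by
    have h20 : Real.exp (L/2) * (4 * Real.exp (-δ * L + t/2) / ((1/3) * Real.exp (-L/2 - t/2)))
        = 12 * (Real.exp (L/2) * Real.exp (-δ * L + t/2) / Real.exp (-L/2 - t/2)) := by
      ring
    rw [h20, ← Real.exp_add, ← Real.exp_sub]
    congr 2
    ring
  calc Real.exp (L/2) * (2 * τ * (ε * (tailG (t-τ) - tailG (t+τ))) /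
        Real.sqrt (ε * (tailG (t-τ) + tailG (t+τ)) + (1-ε) * (tailG t + tailG t)))
      ≤ Real.exp (L/2) * (4 * Real.exp (-δ * L + t/2) / ((1/3) * Real.exp (-L/2 - t/2))) :=
        mul_le_mul_of_nonneg_left hdiv (Real.exp_pos _).le
    _ = 12 * Real.exp ((1 - δ) * L + t) := hrw

end key



lemma tendsto_sqrt_atTop : Tendsto Real.sqrt atTop atTop := by
  refine tendsto_atTop_atTop.2 fun b => ⟨max (b^2) 0, fun x hx => ?_⟩
  rcases le_or_gt b 0 with hb | hb
  · exact le_trans hb (Real.sqrt_nonneg x)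
  · have hx2 : b^2 ≤ x := le_trans (le_max_left _ _) hx
    calc b = Real.sqrt (b^2) := (Real.sqrt_sq hb.le).symm
      _ ≤ Real.sqrt x := Real.sqrt_le_sqrt hx2

lemma lemA {c : ℝ} (C : ℝ) (hc : 0 < c) :
    Tendsto (fun L => c * L - C * Real.sqrt L) atTop atTop := by
  have h1 : Tendsto (fun L => Real.sqrt L * (c * Real.sqrt L - C)) atTop atTop :=
    Tendsto.atTop_mul_atTop₀ tendsto_sqrt_atTop
      (tendsto_atTop_add_const_right _ (-C) (tendsto_sqrt_atTop.const_mul_atTop hc))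
  refine h1.congr' ?_
  filter_upwards [eventually_ge_atTop (0:ℝ)] with L hL
  rw [mul_sub, ← mul_assoc, mul_comm (Real.sqrt L) c, mul_assoc, Real.mul_self_sqrt hL]
  ring

lemma hlogN : Tendsto (fun p : ℕ => Real.log p) atTop atTop :=
  Real.tendsto_log_atTop.comp tendsto_natCast_atTop_atTop

lemma lemB {c : ℝ} (hc : 0 < c) :
    Tendsto (fun p : ℕ => c * Real.log p - Real.sqrt (2 * Real.log p)) atTop atTop := by
  have h := (lemA (C := Real.sqrt 2) hc).comp hlogN
  refine h.congr' ?_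
  filter_upwards [hlogN.eventually_ge_atTop 0] with p hp
  simp only [Function.comp]
  rw [Real.sqrt_mul (by norm_num : (0:ℝ) ≤ 2)]


lemma delta_lt {β r : ℝ} (hβ1 : 0 < β) (hβ2 : β < 1) (hr1 : 0 < r) (hr2 : r < 1)
    (h : (1 - Real.sqrt (1 - β))^2 < r) : β + (1 - Real.sqrt r)^2 < 1 := by
  have hu2 : (Real.sqrt (1-β))^2 = 1 - β := Real.sq_sqrt (by linarith)
  have hs2 : (Real.sqrt r)^2 = r := Real.sq_sqrt hr1.le
  have hu0 : 0 ≤ Real.sqrt (1-β) := Real.sqrt_nonneg _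
  have hu1 : Real.sqrt (1-β) ≤ 1 := Real.sqrt_le_one.mpr (by linarith)
  have hs0 : 0 ≤ Real.sqrt r := Real.sqrt_nonneg _
  have hs1 : Real.sqrt r ≤ 1 := Real.sqrt_le_one.mpr hr2.le
  set u := Real.sqrt (1-β); set s := Real.sqrt r
  have h1 : 1 - u < s := by nlinarith [sq_nonneg (s - (1 - u)), sq_nonneg (s + (1 - u))]
  nlinarith [sq_nonneg (u - (1 - s)), sq_nonneg (u + (1 - s))]

lemma delta_gt {β r : ℝ} (hβ1 : 0 < β) (hβ2 : β < 1) (hr1 : 0 < r) (hr2 : r < 1)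
    (h : r < (1 - Real.sqrt (1 - β))^2) : 1 < β + (1 - Real.sqrt r)^2 := by
  have hu2 : (Real.sqrt (1-β))^2 = 1 - β := Real.sq_sqrt (by linarith)
  have hs2 : (Real.sqrt r)^2 = r := Real.sq_sqrt hr1.le
  have hu0 : 0 ≤ Real.sqrt (1-β) := Real.sqrt_nonneg _
  have hu1 : Real.sqrt (1-β) ≤ 1 := Real.sqrt_le_one.mpr (by linarith)
  have hs0 : 0 ≤ Real.sqrt r := Real.sqrt_nonneg _
  have hs1 : Real.sqrt r ≤ 1 := Real.sqrt_le_one.mpr hr2.le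
  set u := Real.sqrt (1-β); set s := Real.sqrt r
  have h1 : s < 1 - u := by nlinarith [sq_nonneg (s - (1 - u)), sq_nonneg (s + (1 - u))]
  nlinarith [sq_nonneg (u - (1 - s)), sq_nonneg (u + (1 - s))]


section final
variable {β r : ℝ}

lemma sqrt_r_lt_one (hr1 : 0 < r) (hr2 : r < 1) : Real.sqrt r < 1 := by
  have := Real.sqrt_lt_sqrt hr1.le hr2
  simpa using this

lemma eventually_conds (hβ1 : 0 < β) (hr1 : 0 < r) (hr2 : r < 1) :
    ∀ᶠ p : ℕ in atTop, (0 < Real.log p ∧ 1 ≤ (p:ℝ)) ∧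
      (1 ≤ Real.sqrt (2*r*Real.log p) ∧ 1 ≤ (1 - Real.sqrt r) * Real.sqrt (2*Real.log p)) ∧
      Real.exp (-β * Real.log p) ≤ 1/2 := by
  have hs1 : Real.sqrt r < 1 := sqrt_r_lt_one hr1 hr2
  have h1s : 0 < 1 - Real.sqrt r := by linarith
  filter_upwards [hlogN.eventually_ge_atTop (1/(2*r)),
    hlogN.eventually_ge_atTop ((1/(1 - Real.sqrt r))^2/2),
    hlogN.eventually_ge_atTop (1/β), hlogN.eventually_ge_atTop 1,
    eventually_ge_atTop 1] with p h1 h2 h3 h4 h5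
  have hL0 : 0 < Real.log p := by linarith
  set L := Real.log p
  have hp1 : (1:ℝ) ≤ (p:ℕ) := by exact_mod_cast h5
  refine ⟨⟨hL0, hp1⟩, ⟨?_, ?_⟩, ?_⟩
  · have h6 : (1:ℝ) ≤ 2*r*L := by
      have := (div_le_iff₀ (by positivity : (0:ℝ) < 2*r)).mp (by linarith : 1/(2*r) ≤ L)
      linarith
    calc (1:ℝ) = Real.sqrt 1 := by simp
      _ ≤ Real.sqrt (2*r*L) := Real.sqrt_le_sqrt h6
  · have h7 : (1/(1 - Real.sqrt r))^2 ≤ 2*L := by linarith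
    have h8 : 1/(1 - Real.sqrt r) ≤ Real.sqrt (2*L) := by
      calc 1/(1 - Real.sqrt r) = Real.sqrt ((1/(1 - Real.sqrt r))^2) :=
            (Real.sqrt_sq (by positivity)).symm
        _ ≤ Real.sqrt (2*L) := Real.sqrt_le_sqrt h7
    calc (1:ℝ) = (1 - Real.sqrt r) * (1/(1 - Real.sqrt r)) := by field_simp
      _ ≤ (1 - Real.sqrt r) * Real.sqrt (2*L) :=
          mul_le_mul_of_nonneg_left h8 h1s.le
  · have h9 : (1:ℝ) ≤ β * L := by
      have := (div_le_iff₀ hβ1).mp (by linarith : 1/β ≤ L)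
      linarith
    have h10 : Real.exp (-β*L) ≤ Real.exp (-1) := Real.exp_le_exp.mpr (by linarith)
    have h11 : Real.exp (-1) ≤ 1/2 := by
      rw [Real.exp_neg]
      have h12 : (2:ℝ) ≤ Real.exp 1 := by
        have := Real.add_one_le_exp (1:ℝ); linarith
      rw [show (1:ℝ)/2 = (2:ℝ)⁻¹ by norm_num]
      exact inv_anti₀ (by norm_num) h12
    linarith

lemma convert_form {p : ℕ} (hp1 : (1:ℝ) ≤ (p:ℕ)) :
    Real.sqrt p * sepFn (epsP β p) (tauP r p) (tP 1 p)
      = Real.exp (Real.log p / 2) *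
        sepFn (Real.exp (-β * Real.log p)) (Real.sqrt (2*r*Real.log p))
          (Real.sqrt (2*Real.log p)) := by
  have hp0 : (0:ℝ) < (p:ℕ) := by linarith
  have heps : epsP β p = Real.exp (-β * Real.log p) := by
    unfold epsP
    rw [Real.rpow_def_of_pos hp0]
    congr 1; ring
  have htP : tP 1 p = Real.sqrt (2*Real.log p) := by unfold tP; norm_num
  have hsq : Real.sqrt p = Real.exp (Real.log p / 2) := by
    rw [show Real.log (p:ℕ) / 2 = Real.log (Real.sqrt p) by
      rw [Real.log_sqrt (Nat.cast_nonneg p)],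
      Real.exp_log (Real.sqrt_pos.mpr hp0)]
  rw [heps, htP, hsq]
  rfl

end final


/-- Phase diagram for Bonferroni thresholding t_p(1) = √(2 log p). -/
theorem stmt8 (β r : ℝ) (hβ1 : 0 < β) (hβ2 : β < 1) (hr1 : 0 < r) (hr2 : r < 1) :
    ((1 - Real.sqrt (1 - β)) ^ 2 < r →
      Filter.Tendsto (fun p : ℕ => Real.sqrt p * sepFn (epsP β p) (tauP r p) (tP 1 p))
        Filter.atTop Filter.atTop) ∧
    (r < (1 - Real.sqrt (1 - β)) ^ 2 →
      Filter.Tendsto (fun p : ℕ => Real.sqrt p * sepFn (epsP β p) (tauP r p) (tP 1 p))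
        Filter.atTop (nhds 0)) := by
  constructor
  · intro h
    have hδ1 : β + (1 - Real.sqrt r)^2 < 1 := delta_lt hβ1 hβ2 hr1 hr2 (by
      convert h using 2)
    have hc : 0 < (1 - (β + (1 - Real.sqrt r)^2))/2 := by linarith
    have hg : Tendsto (fun p : ℕ => (1/9) * Real.exp
        ((1 - (β + (1 - Real.sqrt r)^2))/2 * Real.log p - Real.sqrt (2*Real.log p)))
        atTop atTop := by
      have h1 := Real.tendsto_exp_atTop.comp (lemB hc)
      have h2 := h1.const_mul_atTop (by norm_num : (0:ℝ) < 1/9)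
      exact h2.congr fun p => by simp [Function.comp]
    apply tendsto_atTop_mono' atTop ?_ hg
    filter_upwards [eventually_conds hβ1 hr1 hr2] with p ⟨⟨hL0, hp1⟩, ⟨hτ, ha⟩, hε⟩
    rw [convert_form hp1]
    have := key_lower (L := Real.log p) hβ1 hr1 hr2 hδ1.le hL0 hτ ha
    convert this using 4 <;> ring
  · intro h
    have hδ2 : 1 < β + (1 - Real.sqrt r)^2 := delta_gt hβ1 hβ2 hr1 hr2 (by
      convert h using 2)
    have hc : 0 < (β + (1 - Real.sqrt r)^2) - 1 := by linarith
    have hg : Tendsto (fun p : ℕ => 12 * Real.exp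
        ((1 - (β + (1 - Real.sqrt r)^2)) * Real.log p + Real.sqrt (2*Real.log p)))
        atTop (nhds 0) := by
      have h1 := tendsto_neg_atTop_atBot.comp (lemB hc)
      have h2 := Real.tendsto_exp_atBot.comp h1
      have h3 := h2.const_mul (12:ℝ)
      rw [mul_zero] at h3
      refine h3.congr fun p => ?_
      simp only [Function.comp]
      congr 1
      ring
    apply squeeze_zero' ?_ ?_ hg
    · filter_upwards [] with p
      exact mul_nonneg (Real.sqrt_nonneg _)
        (sep_nonneg (Real.rpow_nonneg (Nat.cast_nonneg p) _) (Real.sqrt_nonneg _))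
    · filter_upwards [eventually_conds hβ1 hr1 hr2] with p ⟨⟨hL0, hp1⟩, ⟨hτ, ha⟩, hε⟩
      rw [convert_form hp1]
      exact key_upper hβ1 hr1 hr2 hL0 hτ ha hε
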